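/- Let C be a model knot complex and let g ≥ 1 be an integer such that |alg(x) − Alex(x)| ≤ g for every basis element x. Fix t ∈ (0,2). Then, on the set where it is finite, the piecewise linear function s ↦ Υ²_{C,t}(s) satisfies: at every s ∈ (0,2) where it is differentiable, its derivative has absolute value at most g; and every s₀ ∈ (0,2) at which its derivative jumps is a rational number which, written in lowest terms as s₀ = p/q, satisfies q ≤ g if p is odd, and q/2 ≤ g if p is even. -/

import Mathlib

open scoped BigOperators

/-- A "pre-complex": a finite distinguished basis `B`, a grading `gr`,
bifiltration functions `alg` and `alex`, and a differential recorded by its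
matrix `d` over the field `F₂ = ZMod 2`:  `∂ x = ∑ y, d x y • y`. -/
structure PreComplex where
  B : Type
  fB : Fintype B
  dB : DecidableEq B
  gr : B → ℤ
  alg : B → ℤ
  alex : B → ℤ
  d : B → B → ZMod 2

attribute [instance] PreComplex.fB PreComplex.dB

namespace PreComplex

variable (C : PreComplex)

/-- Chains: F₂-linear combinations of basis elements. -/
abbrev Chain : Type := C.B → ZMod 2

/-- The boundary of a chain, extending `∂ x = ∑ y, d x y • y` linearly. -/
def bdry (c : C.Chain) : C.Chain := fun y => ∑ x, c x * C.d x y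

/-- A chain is homogeneous of grading `k`. -/
def isGraded (c : C.Chain) (k : ℤ) : Prop := ∀ x, c x ≠ 0 → C.gr x = k

def isCycle (c : C.Chain) : Prop := C.bdry c = 0

def isBoundary (c : C.Chain) : Prop := ∃ w : C.Chain, C.bdry w = c

/-- A cycle of grading 0 representing the nonzero class of `H₀(C)`. -/
def GenCycle (z : C.Chain) : Prop :=
  C.isCycle z ∧ C.isGraded z 0 ∧ ¬ C.isBoundary z

/-- The bifiltration level of a basis element. -/
def lev (x : C.B) : ℤ × ℤ := (C.alg x, C.alex x)

/-- A model knot complex: `∂ ∘ ∂ = 0`; `∂` drops the grading by one and does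
not increase either filtration; the homology is one dimensional, concentrated
in grading 0; and the minimum over cycles representing the generator of
`H₀(C)` of their maximal `alg` (resp. `alex`) filtration level is 0. -/
def IsModel : Prop :=
  (∀ x z, (∑ y, C.d x y * C.d y z) = 0) ∧
  (∀ x y, C.d x y ≠ 0 → C.gr y = C.gr x - 1 ∧ C.alg y ≤ C.alg x ∧ C.alex y ≤ C.alex x) ∧
  (∀ k : ℤ, k ≠ 0 → ∀ z : C.Chain, C.isCycle z → C.isGraded z k → C.isBoundary z) ∧
  (∃ z : C.Chain, C.GenCycle z) ∧
  (∀ z z' : C.Chain, C.GenCycle z → C.GenCycle z' → C.isBoundary (z + z')) ∧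
  (∃ z : C.Chain, C.GenCycle z ∧ ∀ x, z x ≠ 0 → C.alg x ≤ 0) ∧
  (∀ z : C.Chain, C.GenCycle z → ∃ x, z x ≠ 0 ∧ 0 ≤ C.alg x) ∧
  (∃ z : C.Chain, C.GenCycle z ∧ ∀ x, z x ≠ 0 → C.alex x ≤ 0) ∧
  (∀ z : C.Chain, C.GenCycle z → ∃ x, z x ≠ 0 ∧ 0 ≤ C.alex x)

/-- An acyclic complex: conditions (i) and (ii) hold but the homology vanishes. -/
def IsAcyclic : Prop :=
  (∀ x z, (∑ y, C.d x y * C.d y z) = 0) ∧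
  (∀ x y, C.d x y ≠ 0 → C.gr y = C.gr x - 1 ∧ C.alg y ≤ C.alg x ∧ C.alex y ≤ C.alex x) ∧
  (∀ z : C.Chain, C.isCycle z → C.isBoundary z)

end PreComplex

/-- `f_t(i,j) = (t/2)·j + (1 − t/2)·i`. -/
noncomputable def fval (t : ℝ) (p : ℤ × ℤ) : ℝ :=
  (t / 2) * (p.2 : ℝ) + (1 - t / 2) * (p.1 : ℝ)

namespace PreComplex

variable (C : PreComplex)

/-- A chain lies in the subcomplex `F_{t,s}`. -/
def inF (t s : ℝ) (c : C.Chain) : Prop :=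
  ∀ x, c x ≠ 0 → fval t (C.lev x) ≤ s

/-- `γ_C(t)`: the minimal `s` such that `H₀(F_{t,s}) → H₀(C)` is surjective,
i.e. such that `F_{t,s}` contains a cycle representing the generator. -/
noncomputable def gamma (t : ℝ) : ℝ :=
  sInf {s : ℝ | ∃ z : C.Chain, C.GenCycle z ∧ C.inF t s z}

/-- The Upsilon invariant `Υ_C(t) = −2 γ_C(t)`. -/
noncomputable def Upsilon (t : ℝ) : ℝ := -2 * C.gamma t

/-- `P`: the set of bifiltration levels of basis elements. -/
def PSet : Set (ℤ × ℤ) := Set.range C.lev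

/-- `P_u = { p ∈ P : f_u(p) = γ_C(u) }`. -/
def Pt (u : ℝ) : Set (ℤ × ℤ) := {p ∈ C.PSet | fval u p = C.gamma u}

/-- `p` is the negative pivot point of `C` at `t`. -/
def IsNegPivot (t : ℝ) (p : ℤ × ℤ) : Prop :=
  ∃ δ₀ > (0 : ℝ), ∀ δ : ℝ, 0 < δ → δ < δ₀ → C.Pt (t - δ) ∩ C.Pt t = {p}

/-- `p` is the positive pivot point of `C` at `t`. -/
def IsPosPivot (t : ℝ) (p : ℤ × ℤ) : Prop :=
  ∃ δ₀ > (0 : ℝ), ∀ δ : ℝ, 0 < δ → δ < δ₀ → C.Pt (t + δ) ∩ C.Pt t = {p}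

/-- Cycles in `F_{t−δ, γ_C(t−δ)}` representing the nonzero class of `H₀(C)`. -/
def ZminusAt (t δ : ℝ) : Set C.Chain :=
  {z | C.GenCycle z ∧ C.inF (t - δ) (C.gamma (t - δ)) z}

/-- Cycles in `F_{t+δ, γ_C(t+δ)}` representing the nonzero class of `H₀(C)`. -/
def ZplusAt (t δ : ℝ) : Set C.Chain :=
  {z | C.GenCycle z ∧ C.inF (t + δ) (C.gamma (t + δ)) z}

/-- `Z⁻`: the (eventual, for all sufficiently small `δ > 0`) set of cycles in
`F_{t−δ, γ_C(t−δ)}` representing the nonzero class of `H₀(C)`. -/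
def Zminus (t : ℝ) : Set C.Chain :=
  {z | ∃ δ₀ > (0 : ℝ), ∀ δ : ℝ, 0 < δ → δ < δ₀ → z ∈ C.ZminusAt t δ}

/-- `Z⁺`: the (eventual, for all sufficiently small `δ > 0`) set of cycles in
`F_{t+δ, γ_C(t+δ)}` representing the nonzero class of `H₀(C)`. -/
def Zplus (t : ℝ) : Set C.Chain :=
  {z | ∃ δ₀ > (0 : ℝ), ∀ δ : ℝ, 0 < δ → δ < δ₀ → z ∈ C.ZplusAt t δ}

/-- A basis element lies in the subcomplex `F_{t,γ_C(t)} + F_{s,r}`. -/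
def inRegion (t s r : ℝ) (x : C.B) : Prop :=
  fval t (C.lev x) ≤ C.gamma t ∨ fval s (C.lev x) ≤ r

/-- `z` and `z'` represent the same homology class in `H₀(F_{t,γ_C(t)} + F_{s,r})`
(over F₂ the difference `z − z'` is `z + z'`). -/
def sameClass (t s r : ℝ) (z z' : C.Chain) : Prop :=
  (∀ x, z x ≠ 0 → C.inRegion t s r x) ∧
  (∀ x, z' x ≠ 0 → C.inRegion t s r x) ∧
  ∃ w : C.Chain, (∀ x, w x ≠ 0 → C.inRegion t s r x) ∧ C.bdry w = z + z'

/-- The set of `r` for which some `z⁻ ∈ Z⁻` and `z⁺ ∈ Z⁺` represent the same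
class in `H₀(F_{t,γ_C(t)} + F_{s,r})`. -/
def gamma2Set (t s : ℝ) : Set ℝ :=
  {r | ∃ zm ∈ C.Zminus t, ∃ zp ∈ C.Zplus t, C.sameClass t s r zm zp}

/-- `γ²_{C,t}(s)`, as an extended real: the minimum of `gamma2Set`
(`−∞` if the condition holds for every `r`). -/
noncomputable def gamma2 (t s : ℝ) : EReal :=
  sInf ((fun r : ℝ => (r : EReal)) '' C.gamma2Set t s)

/-- `Υ²_{C,t}(s) = −2 (γ²_{C,t}(s) − γ_C(t))`. -/
noncomputable def Upsilon2 (t s : ℝ) : EReal :=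
  (-2 : EReal) * (C.gamma2 t s - (C.gamma t : EReal))

end PreComplex

/-- The jump of the derivative of `f` at `t`: the right-hand derivative minus
the left-hand derivative. -/
noncomputable def derivJump (f : ℝ → ℝ) (t : ℝ) : ℝ :=
  derivWithin f (Set.Ici t) t - derivWithin f (Set.Iic t) t

/-- Direct sum of two pre-complexes. -/
def PreComplex.dsum (C A : PreComplex) : PreComplex where
  B := C.B ⊕ A.B
  fB := inferInstance
  dB := inferInstance
  gr := Sum.elim C.gr A.gr
  alg := Sum.elim C.alg A.alg
  alex := Sum.elim C.alex A.alex
  d := fun x y =>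
    match x, y with
    | Sum.inl x, Sum.inl y => C.d x y
    | Sum.inr x, Sum.inr y => A.d x y
    | _, _ => 0

/-- Tensor product of two pre-complexes. -/
def PreComplex.tensor (C₁ C₂ : PreComplex) : PreComplex where
  B := C₁.B × C₂.B
  fB := inferInstance
  dB := inferInstance
  gr := fun x => C₁.gr x.1 + C₂.gr x.2
  alg := fun x => C₁.alg x.1 + C₂.alg x.2
  alex := fun x => C₁.alex x.1 + C₂.alex x.2
  d := fun x y =>
    (if x.2 = y.2 then C₁.d x.1 y.1 else 0) + (if x.1 = y.1 then C₂.d x.2 y.2 else 0)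

/-- An isomorphism of pre-complexes: a bijection of the distinguished bases
preserving `gr`, `alg`, `alex`, whose linear extension commutes with the
differentials. -/
def PreComplex.Iso (C₁ C₂ : PreComplex) : Prop :=
  ∃ e : C₁.B ≃ C₂.B,
    (∀ x, C₂.gr (e x) = C₁.gr x) ∧
    (∀ x, C₂.alg (e x) = C₁.alg x) ∧
    (∀ x, C₂.alex (e x) = C₁.alex x) ∧
    (∀ x y, C₂.d (e x) (e y) = C₁.d x y)

/-- Stable equivalence of pre-complexes: isomorphism after adding acyclic
summands. -/
def PreComplex.StablyEquiv (C₁ C₂ : PreComplex) : Prop :=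
  ∃ A₁ A₂ : PreComplex, A₁.IsAcyclic ∧ A₂.IsAcyclic ∧ (C₁.dsum A₁).Iso (C₂.dsum A₂)

/-- if `|alg(x) − Alex(x)| ≤ g` for all basis elements `x`, then
on the set where `Υ²_{C,t}` is finite: wherever differentiable its derivative
is at most `g` in absolute value, and any point of `(0,2)` where the
derivative jumps is rational `p/q` (lowest terms) with `q ≤ g` for `p` odd and
`q/2 ≤ g` for `p` even. -/

private lemma ereal_neg_two : ((-2 : EReal)) = (((-2 : ℝ)) : EReal) := by
  rw [show ((-2:ℝ)) = -(2:ℝ) by norm_num, EReal.coe_neg,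
    show ((2:ℝ):EReal) = (2:EReal) by norm_cast]

private lemma ereal_neg_two_lt : ((-2 : EReal)) < 0 := by
  rw [ereal_neg_two, show ((0:EReal)) = ((0:ℝ):EReal) by norm_cast]
  exact EReal.coe_lt_coe_iff.mpr (by norm_num)

private lemma exists_gap (E : Finset ℝ) (w : ℝ) :
    ∃ ε > 0, ∀ e ∈ E, e ≠ w → e ∉ Set.Ioo (w - ε) (w + ε) := by
  have hfin : ((E : Set ℝ) \ {w}).Finite := E.finite_toSet.diff
  have hw : w ∈ ((E : Set ℝ) \ {w})ᶜ := fun h => h.2 rfl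
  obtain ⟨ε, hε, hball⟩ := Metric.isOpen_iff.mp hfin.isClosed.isOpen_compl w hw
  refine ⟨ε, hε, fun e he hne hmem => ?_⟩
  have hb : e ∈ Metric.ball w ε := by rw [Real.ball_eq_Ioo]; exact hmem
  exact (hball hb) ⟨he, fun h => hne h⟩

private lemma affine_minmax {ι : Type} (A : Finset (Finset ι)) (hA : A.Nonempty)
    (hX : ∀ Y ∈ A, Y.Nonempty) (u v : ι → ℝ) (L : ι → ℝ → ℝ)
    (hL : ∀ i s, L i s = u i + s * v i) (c d : ℝ) (hcd : c < d)
    (hNC : ∀ i j, v i ≠ v j → ∀ s ∈ Set.Ioo c d, L i s ≠ L j s) :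
    ∃ i₀ : ι, ∀ s ∈ Set.Ioo c d,
      A.inf' hA (fun Y => if h : Y.Nonempty then Y.sup' h (fun i => L i s) else 0)
        = L i₀ s := by
  classical
  set a : ℝ := (c + d) / 2 with hadef
  have ha : a ∈ Set.Ioo c d := ⟨by rw [hadef]; linarith, by rw [hadef]; linarith⟩
  have hdom : ∀ i j, L i a ≤ L j a → ∀ s ∈ Set.Ioo c d, L i s ≤ L j s := by
    intro i j hij s hs
    by_cases hv : v i = v j
    · rw [hL i s, hL j s, hv]
      rw [hL i a, hL j a, hv] at hij
      linarith
    · have hlt : L i a < L j a := lt_of_le_of_ne hij (hNC i j hv a ha)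
      by_contra hgt
      push_neg at hgt
      set f : ℝ → ℝ := fun r => L j r - L i r with hfdef
      have hfa : 0 < f a := by simp only [hfdef]; linarith
      have hfs : f s < 0 := by simp only [hfdef]; linarith
      have hfeq : f = fun r => (u j - u i) + r * (v j - v i) := by
        funext r; simp only [hfdef]; rw [hL, hL]; ring
      have hcont : Continuous f := by
        rw [hfeq]; exact continuous_const.add (continuous_id.mul continuous_const)
      have hzero : ∃ r ∈ Set.Ioo c d, f r = 0 := by
        rcases lt_or_gt_of_ne (show a ≠ s from fun h => by rw [h] at hfa; linarith) with h | h
        · have := intermediate_value_Icc' h.le hcont.continuousOn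
          obtain ⟨r, hr, hr0⟩ := this ⟨hfs.le, hfa.le⟩
          exact ⟨r, ⟨lt_of_lt_of_le ha.1 hr.1, lt_of_le_of_lt hr.2 hs.2⟩, hr0⟩
        · have := intermediate_value_Icc h.le hcont.continuousOn
          obtain ⟨r, hr, hr0⟩ := this ⟨hfs.le, hfa.le⟩
          exact ⟨r, ⟨lt_of_lt_of_le hs.1 hr.1, lt_of_le_of_lt hr.2 ha.2⟩, hr0⟩
      obtain ⟨r, hr, hr0⟩ := hzero
      exact hNC i j hv r hr (by simp only [hfdef] at hr0; linarith)
  have hmax : ∀ Y : Finset ι, Y.Nonempty → ∃ x, x ∈ Y ∧ ∀ y ∈ Y, L y a ≤ L x a := by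
    intro Y hY
    obtain ⟨x, hx, hx'⟩ := Finset.exists_max_image Y (fun x => L x a) hY
    exact ⟨x, hx, hx'⟩
  obtain ⟨Y0, hY0⟩ := id hA
  obtain ⟨x00, -⟩ := hX Y0 hY0
  have : Nonempty ι := ⟨x00⟩
  choose! xsel hxmem hxmax using hmax
  have hYeval : ∀ Y ∈ A, ∀ s ∈ Set.Ioo c d,
      (if h : Y.Nonempty then Y.sup' h (fun i => L i s) else 0) = L (xsel Y) s := by
    intro Y hY s hs
    rw [dif_pos (hX Y hY)]
    apply le_antisymm
    · exact Finset.sup'_le _ _ (fun y hy => hdom y (xsel Y) (hxmax Y (hX Y hY) y hy) s hs)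
    · exact Finset.le_sup' (fun i => L i s) (hxmem Y (hX Y hY))
  obtain ⟨Ym, hYm, hYmin⟩ := Finset.exists_min_image A (fun Y => L (xsel Y) a) hA
  refine ⟨xsel Ym, fun s hs => ?_⟩
  apply le_antisymm
  · have h1 := Finset.inf'_le (b := Ym)
      (fun Y => if h : Y.Nonempty then Y.sup' h (fun i => L i s) else (0:ℝ)) hYm
    rwa [hYeval Ym hYm s hs] at h1
  · apply Finset.le_inf'
    intro Y hY
    rw [hYeval Y hY s hs]
    exact hdom (xsel Ym) (xsel Y) (hYmin Y hY) s hs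

private lemma denom_lemma_pos (g a b : ℤ) (hg : 1 ≤ g) (hb : 0 < b) (hb2 : b ≤ 2 * g)
    (s₀ : ℝ) (hs : s₀ = 2 * (a : ℝ) / (b : ℝ)) :
    ∃ p q : ℤ, 0 < q ∧ Int.gcd p q = 1 ∧ s₀ = (p : ℝ) / (q : ℝ) ∧
      (Odd p → q ≤ g) ∧ (Even p → q ≤ 2 * g) := by
  set n : ℕ := Int.gcd (2 * a) b with hn
  have hn0 : 0 < n := Int.gcd_pos_iff.mpr (Or.inr hb.ne')
  have hn0' : (0 : ℤ) < (n : ℤ) := by exact_mod_cast hn0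
  set p : ℤ := 2 * a / (n : ℤ) with hpdef
  set q : ℤ := b / (n : ℤ) with hqdef
  have hq : q * n = b := Int.ediv_mul_cancel (Int.gcd_dvd_right (2 * a) b)
  have hp : p * n = 2 * a := Int.ediv_mul_cancel (Int.gcd_dvd_left (2 * a) b)
  have hqpos : 0 < q := by
    by_contra hq0
    push_neg at hq0
    have : q * n ≤ 0 := mul_nonpos_of_nonpos_of_nonneg hq0 hn0'.le
    rw [hq] at this; linarith
  have hgcd : Int.gcd p q = 1 := Int.gcd_div_gcd_div_gcd hn0
  have hcross : p * b = 2 * a * q := by rw [← hp, ← hq]; ring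
  have hqle : q ≤ b := by
    have h1 : q * 1 ≤ q * n := by
      apply mul_le_mul_of_nonneg_left _ hqpos.le
      exact_mod_cast hn0
    rw [mul_one, hq] at h1; exact h1
  refine ⟨p, q, hqpos, hgcd, ?_, ?_, fun _ => by linarith⟩
  · rw [hs, div_eq_div_iff (by exact_mod_cast hb.ne' : (b:ℝ) ≠ 0)
      (by exact_mod_cast hqpos.ne' : (q:ℝ) ≠ 0)]
    exact_mod_cast hcross.symm
  · intro hodd
    have h2dvd : (2 : ℤ) ∣ p * n := ⟨a, by rw [hp]⟩
    have hnp : ¬ (2 : ℤ) ∣ p := by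
      obtain ⟨m, hm⟩ := hodd
      rintro ⟨k, hk⟩
      omega
    have h2n : (2 : ℤ) ∣ (n : ℤ) :=
      ((Int.Prime.dvd_mul' Nat.prime_two h2dvd).resolve_left hnp)
    have h2n' : (2 : ℤ) ≤ (n : ℤ) := Int.le_of_dvd hn0' h2n
    have : q * 2 ≤ q * n := mul_le_mul_of_nonneg_left h2n' hqpos.le
    rw [hq] at this
    linarith

private lemma denom_lemma (g a b : ℤ) (hg : 1 ≤ g) (hb : b ≠ 0) (hb2 : |b| ≤ 2 * g)
    (s₀ : ℝ) (hs : s₀ = 2 * (a : ℝ) / (b : ℝ)) :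
    ∃ p q : ℤ, 0 < q ∧ Int.gcd p q = 1 ∧ s₀ = (p : ℝ) / (q : ℝ) ∧
      (Odd p → q ≤ g) ∧ (Even p → q ≤ 2 * g) := by
  rcases hb.lt_or_gt with h | h
  · apply denom_lemma_pos g (-a) (-b) hg (by linarith)
      (by rw [abs_of_neg h] at hb2; linarith) s₀
    rw [hs, show ((-b : ℤ) : ℝ) = -(b : ℝ) by push_cast; ring,
      show 2 * ((-a : ℤ) : ℝ) = -(2 * (a : ℝ)) by push_cast; ring, neg_div_neg_eq]
  · exact denom_lemma_pos g a b hg h (by rwa [abs_of_pos h] at hb2) s₀ hs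

theorem upsilon2_genus_bound (C : PreComplex) (hC : C.IsModel)
    (g : ℤ) (hg : 1 ≤ g) (hgenus : ∀ x, |C.alg x - C.alex x| ≤ g)
    (t : ℝ) (ht : t ∈ Set.Ioo (0 : ℝ) 2) :
    (∀ s ∈ Set.Ioo (0 : ℝ) 2, (∃ v : ℝ, C.Upsilon2 t s = (v : EReal)) →
      DifferentiableAt ℝ (fun s' => (C.Upsilon2 t s').toReal) s →
      |deriv (fun s' => (C.Upsilon2 t s').toReal) s| ≤ (g : ℝ)) ∧
    (∀ s₀ ∈ Set.Ioo (0 : ℝ) 2, (∃ v : ℝ, C.Upsilon2 t s₀ = (v : EReal)) →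
      ¬ DifferentiableAt ℝ (fun s' => (C.Upsilon2 t s').toReal) s₀ →
      ∃ p q : ℤ, 0 < q ∧ Int.gcd p q = 1 ∧ s₀ = (p : ℝ) / (q : ℝ) ∧
        (Odd p → q ≤ g) ∧ (Even p → q ≤ 2 * g)) := by
  classical
  obtain ⟨ht0, ht2⟩ := ht
  set γ : ℝ := C.gamma t with hγdef
  set u : C.B → ℝ := fun x => (C.alg x : ℝ) with hu
  set vv : C.B → ℝ := fun x => ((C.alex x : ℝ) - (C.alg x : ℝ)) / 2 with hvv
  have hfv : ∀ (s : ℝ) (x : C.B), fval s (C.lev x) = u x + s * vv x := by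
    intro s x
    simp only [fval, PreComplex.lev, hu, hvv]
    ring
  set Ecross : Finset ℝ :=
    ((Finset.univ ×ˢ Finset.univ : Finset (C.B × C.B)).filter
      (fun p => vv p.1 ≠ vv p.2)).image
      (fun p => (u p.1 - u p.2) / (vv p.2 - vv p.1)) with hEdef
  have hcross_mem : ∀ (x y : C.B) (s : ℝ), vv x ≠ vv y →
      u x + s * vv x = u y + s * vv y → s ∈ Ecross := by
    intro x y s hvne heq
    have hne : vv y - vv x ≠ 0 := sub_ne_zero.mpr (Ne.symm hvne)
    have hseq : s = (u x - u y) / (vv y - vv x) := by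
      rw [eq_div_iff hne]
      linear_combination -heq
    rw [hEdef]
    exact Finset.mem_image.mpr ⟨(x, y), Finset.mem_filter.mpr
      ⟨Finset.mem_product.mpr ⟨Finset.mem_univ _, Finset.mem_univ _⟩, hvne⟩, hseq.symm⟩
  have bigsetup : (∃ s₁ v : ℝ, C.Upsilon2 t s₁ = (v : EReal)) →
      ∃ F : ℝ → ℝ, ((fun s' => (C.Upsilon2 t s').toReal) = F) ∧
        ∀ c d : ℝ, c < d → (∀ e ∈ Ecross, e ∉ Set.Ioo c d) →
          ∃ x : C.B, ∀ s ∈ Set.Ioo c d,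
            F s = (2 * γ - 2 * u x) + s * (-2 * vv x) := by
    rintro ⟨s₁, v, hv⟩
    set Adm : C.Chain × C.Chain × C.Chain → Prop := fun T =>
      T.1 ∈ C.Zminus t ∧ T.2.1 ∈ C.Zplus t ∧ C.bdry T.2.2 = T.1 + T.2.1 with hAdm
    set Xs : C.Chain × C.Chain × C.Chain → Finset C.B := fun T =>
      Finset.univ.filter
        (fun x => (T.1 x ≠ 0 ∨ T.2.1 x ≠ 0 ∨ T.2.2 x ≠ 0) ∧ γ < fval t (C.lev x)) with hXs
    set 𝒜 : Finset (Finset C.B) := (Finset.univ.filter Adm).image Xs with h𝒜def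
    have hmem : ∀ (s r : ℝ),
        r ∈ C.gamma2Set t s ↔ ∃ Y ∈ 𝒜, ∀ x ∈ Y, fval s (C.lev x) ≤ r := by
      intro s r
      constructor
      · rintro ⟨zm, hzm, zp, hzp, h1, h2, w, hw, hbd⟩
        refine ⟨Xs (zm, zp, w), Finset.mem_image_of_mem _
          (Finset.mem_filter.mpr ⟨Finset.mem_univ _, hzm, hzp, hbd⟩), ?_⟩
        intro x hx
        simp only [hXs, Finset.mem_filter, Finset.mem_univ, true_and] at hx
        obtain ⟨hsupp, hlev⟩ := hx
        have hreg : C.inRegion t s r x := by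
          rcases hsupp with h | h | h
          · exact h1 x h
          · exact h2 x h
          · exact hw x h
        rcases hreg with h | h
        · exact absurd h (not_le.mpr hlev)
        · exact h
      · rintro ⟨Y, hY, hbound⟩
        rw [h𝒜def] at hY
        obtain ⟨T, hT, rfl⟩ := Finset.mem_image.mp hY
        obtain ⟨-, hzm, hzp, hbd⟩ := Finset.mem_filter.mp hT
        have hreg : ∀ x : C.B, (T.1 x ≠ 0 ∨ T.2.1 x ≠ 0 ∨ T.2.2 x ≠ 0) →
            C.inRegion t s r x := by
          intro x hx
          by_cases hc : fval t (C.lev x) ≤ γ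
          · exact Or.inl hc
          · exact Or.inr (hbound x (by
              simp only [hXs, Finset.mem_filter, Finset.mem_univ, true_and]
              exact ⟨hx, not_le.mp hc⟩))
        exact ⟨T.1, hzm, T.2.1, hzp, fun x h => hreg x (Or.inl h),
          fun x h => hreg x (Or.inr (Or.inl h)), T.2.2,
          fun x h => hreg x (Or.inr (Or.inr h)), hbd⟩
    have hγ2 : ∃ c₀ : ℝ, C.gamma2 t s₁ = (c₀ : EReal) := by
      simp only [PreComplex.Upsilon2] at hv
      by_cases hT : C.gamma2 t s₁ = ⊤
      · rw [hT, ← hγdef, EReal.top_sub_coe, EReal.mul_top_of_neg ereal_neg_two_lt] at hv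
        exact absurd hv (by simp)
      by_cases hB : C.gamma2 t s₁ = ⊥
      · rw [hB, EReal.bot_sub, EReal.mul_bot_of_neg ereal_neg_two_lt] at hv
        exact absurd hv (by simp)
      exact ⟨(C.gamma2 t s₁).toReal, (EReal.coe_toReal hT hB).symm⟩
    obtain ⟨c₀, hc₀⟩ := hγ2
    have h𝒜ne : 𝒜.Nonempty := by
      rw [Finset.nonempty_iff_ne_empty]
      intro hemp
      have hempS : C.gamma2Set t s₁ = ∅ := by
        ext r
        simp only [Set.mem_empty_iff_false, iff_false]
        intro hr
        obtain ⟨Y, hY, -⟩ := (hmem s₁ r).mp hr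
        rw [hemp] at hY
        exact absurd hY (Finset.notMem_empty _)
      rw [PreComplex.gamma2, hempS, Set.image_empty, sInf_empty] at hc₀
      exact absurd hc₀.symm (by simp)
    have hYne : ∀ Y ∈ 𝒜, Y.Nonempty := by
      intro Y hY
      rw [Finset.nonempty_iff_ne_empty]
      intro hemp
      have hall : ∀ r : ℝ, r ∈ C.gamma2Set t s₁ := fun r =>
        (hmem s₁ r).mpr ⟨Y, hY, by
          rw [hemp]; intro x hx; exact absurd hx (Finset.notMem_empty _)⟩
      have hle : C.gamma2 t s₁ ≤ ((c₀ - 1 : ℝ) : EReal) :=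
        sInf_le (Set.mem_image_of_mem _ (hall (c₀ - 1)))
      rw [hc₀] at hle
      have := EReal.coe_le_coe_iff.mp hle
      linarith
    set G : ℝ → ℝ := fun s => 𝒜.inf' h𝒜ne
      (fun Y => if h : Y.Nonempty then Y.sup' h (fun x => fval s (C.lev x)) else 0)
      with hGdef
    have hSet : ∀ s : ℝ, C.gamma2Set t s = Set.Ici (G s) := by
      intro s
      ext r
      rw [hmem s r, Set.mem_Ici]
      constructor
      · rintro ⟨Y, hY, hb⟩
        have h1 := Finset.inf'_le (s := 𝒜)
          (fun Y => if h : Y.Nonempty then Y.sup' h (fun x => fval s (C.lev x)) else (0:ℝ)) hY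
        rw [dif_pos (hYne Y hY)] at h1
        exact h1.trans (Finset.sup'_le _ _ hb)
      · intro hr
        obtain ⟨Y, hY, hEq⟩ := Finset.exists_mem_eq_inf' h𝒜ne
          (fun Y => if h : Y.Nonempty then Y.sup' h (fun x => fval s (C.lev x)) else (0:ℝ))
        refine ⟨Y, hY, fun x hx => ?_⟩
        have hstep : (if h : Y.Nonempty then Y.sup' h (fun x => fval s (C.lev x)) else (0:ℝ))
            = Y.sup' (hYne Y hY) (fun x => fval s (C.lev x)) := dif_pos (hYne Y hY)
        calc fval s (C.lev x)
            ≤ Y.sup' (hYne Y hY) (fun x => fval s (C.lev x)) :=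
              Finset.le_sup' (fun x => fval s (C.lev x)) hx
          _ = (if h : Y.Nonempty then Y.sup' h (fun x => fval s (C.lev x)) else (0:ℝ)) :=
              hstep.symm
          _ = G s := hEq.symm
          _ ≤ r := hr
    have hG : ∀ s : ℝ, C.gamma2 t s = ((G s : ℝ) : EReal) := by
      intro s
      rw [PreComplex.gamma2, hSet s]
      apply le_antisymm
      · exact sInf_le ⟨G s, Set.self_mem_Ici, rfl⟩
      · apply le_sInf
        rintro b ⟨r, hr, rfl⟩
        exact EReal.coe_le_coe_iff.mpr hr
    have hFeq : (fun s' => (C.Upsilon2 t s').toReal) = fun s' => -2 * (G s' - γ) := by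
      funext s
      rw [PreComplex.Upsilon2, hG s, ← hγdef,
        show ((G s : ℝ) : EReal) - ((γ : ℝ) : EReal) = (((G s - γ : ℝ)) : EReal) from
          (EReal.coe_sub _ _).symm,
        ereal_neg_two, ← EReal.coe_mul, EReal.toReal_coe]
    refine ⟨fun s' => -2 * (G s' - γ), hFeq, ?_⟩
    intro c d hcd hdisj
    have hNC : ∀ i j : C.B, vv i ≠ vv j → ∀ s ∈ Set.Ioo c d,
        fval s (C.lev i) ≠ fval s (C.lev j) := by
      intro i j hvne s hs heq
      rw [hfv s i, hfv s j] at heq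
      exact hdisj s (hcross_mem i j s hvne heq) hs
    obtain ⟨x₀, hx₀⟩ := affine_minmax 𝒜 h𝒜ne hYne u vv
      (fun x s => fval s (C.lev x)) (fun i s => hfv s i) c d hcd hNC
    refine ⟨x₀, fun s hs => ?_⟩
    have hGs : G s = fval s (C.lev x₀) := hx₀ s hs
    show -2 * (G s - γ) = 2 * γ - 2 * u x₀ + s * (-2 * vv x₀)
    rw [hGs, hfv s x₀]
    ring
  constructor
  · rintro s hs ⟨v, hv⟩ hdiff
    obtain ⟨F, hFfun, haff⟩ := bigsetup ⟨s, v, hv⟩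
    rw [hFfun] at hdiff ⊢
    obtain ⟨ε, hε, hgap⟩ := exists_gap Ecross s
    have hdisj : ∀ e ∈ Ecross, e ∉ Set.Ioo s (s + ε) := by
      intro e he hm
      rcases eq_or_ne e s with rfl | hne
      · exact lt_irrefl e hm.1
      · exact hgap e he hne ⟨by linarith [hm.1], hm.2⟩
    obtain ⟨x₀, hx₀⟩ := haff s (s + ε) (by linarith) hdisj
    set msl : ℝ := -2 * vv x₀ with hmsl
    set l : ℝ → ℝ := fun r => (2 * γ - 2 * u x₀) + r * msl with hldef
    have hlder : ∀ r : ℝ, HasDerivAt l msl r := by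
      intro r
      have h1 : HasDerivAt (fun r : ℝ => r * msl) msl r := by
        simpa using (hasDerivAt_id r).mul_const msl
      simpa [hldef] using h1.const_add (2 * γ - 2 * u x₀)
    have hFs : F s = l s := by
      have hev : F =ᶠ[nhdsWithin s (Set.Ioi s)] l :=
        Filter.eventuallyEq_of_mem
          (Ioo_mem_nhdsGT_of_mem (Set.mem_Ico.mpr ⟨le_refl s, by linarith⟩))
          (fun r hr => hx₀ r hr)
      have h1 : Filter.Tendsto F (nhdsWithin s (Set.Ioi s)) (nhds (F s)) :=
        hdiff.continuousAt.continuousWithinAt.tendsto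
      have h2 : Filter.Tendsto l (nhdsWithin s (Set.Ioi s)) (nhds (l s)) :=
        (hlder s).continuousAt.continuousWithinAt.tendsto
      exact tendsto_nhds_unique h1 (Filter.Tendsto.congr' hev.symm h2)
    have hevIci : F =ᶠ[nhdsWithin s (Set.Ici s)] l := by
      have hIco : Set.Ico s (s + ε) ∈ nhdsWithin s (Set.Ici s) :=
        Ico_mem_nhdsGE (by linarith : s < s + ε)
      apply Filter.eventuallyEq_of_mem hIco
      intro r hr
      rcases eq_or_lt_of_le hr.1 with rfl | hlt
      · exact hFs
      · exact hx₀ r ⟨hlt, hr.2⟩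
    have hud : UniqueDiffWithinAt ℝ (Set.Ici s) s := uniqueDiffOn_Ici s s Set.self_mem_Ici
    have hd1 : HasDerivWithinAt F msl (Set.Ici s) s :=
      ((hlder s).hasDerivWithinAt).congr_of_eventuallyEq hevIci hFs
    have hd2 : HasDerivWithinAt F (deriv F s) (Set.Ici s) s :=
      hdiff.hasDerivAt.hasDerivWithinAt
    have hder : deriv F s = msl := by
      rw [← hd2.derivWithin hud, hd1.derivWithin hud]
    rw [hder]
    have hcast : msl = ((C.alg x₀ - C.alex x₀ : ℤ) : ℝ) := by
      have hv0 : vv x₀ = ((C.alex x₀ : ℝ) - (C.alg x₀ : ℝ)) / 2 := rfl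
      rw [hmsl, hv0]
      push_cast
      ring
    rw [hcast, ← Int.cast_abs]
    exact_mod_cast hgenus x₀
  · rintro s₀ hs₀ ⟨v, hv⟩ hnd
    obtain ⟨F, hFfun, haff⟩ := bigsetup ⟨s₀, v, hv⟩
    rw [hFfun] at hnd
    have hmemE : s₀ ∈ Ecross := by
      by_contra hno
      obtain ⟨ε, hε, hgap⟩ := exists_gap Ecross s₀
      have hdisj : ∀ e ∈ Ecross, e ∉ Set.Ioo (s₀ - ε) (s₀ + ε) := by
        intro e he hm
        rcases eq_or_ne e s₀ with rfl | hne
        · exact hno he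
        · exact hgap e he hne hm
      obtain ⟨x₀, hx₀⟩ := haff (s₀ - ε) (s₀ + ε) (by linarith) hdisj
      have hev : F =ᶠ[nhds s₀] (fun r => (2 * γ - 2 * u x₀) + r * (-2 * vv x₀)) :=
        Filter.eventuallyEq_of_mem (Ioo_mem_nhds (by linarith) (by linarith))
          (fun r hr => hx₀ r hr)
      have hdl : DifferentiableAt ℝ
          (fun r : ℝ => (2 * γ - 2 * u x₀) + r * (-2 * vv x₀)) s₀ :=
        (differentiableAt_id.mul_const _).const_add _
      exact hnd (hev.differentiableAt_iff.mpr hdl)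
    rw [hEdef] at hmemE
    obtain ⟨⟨x, y⟩, hfil, hEq⟩ := Finset.mem_image.mp hmemE
    obtain ⟨-, hvne⟩ := Finset.mem_filter.mp hfil
    set a : ℤ := C.alg x - C.alg y with ha
    set b : ℤ := (C.alex y - C.alg y) - (C.alex x - C.alg x) with hb
    have hbcast : ((b : ℤ) : ℝ) / 2 = vv y - vv x := by
      have hvy : vv y = ((C.alex y : ℝ) - (C.alg y : ℝ)) / 2 := rfl
      have hvx : vv x = ((C.alex x : ℝ) - (C.alg x : ℝ)) / 2 := rfl
      rw [hvy, hvx, hb]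
      push_cast
      ring
    have hbne : b ≠ 0 := by
      intro h0
      apply hvne
      have h1 : vv y - vv x = 0 := by rw [← hbcast, h0]; norm_num
      dsimp only
      linarith
    have hb2 : |b| ≤ 2 * g := by
      have h1 : |C.alex x - C.alg x| ≤ g := by
        rw [abs_sub_comm]; exact hgenus x
      have h2 : |C.alex y - C.alg y| ≤ g := by
        rw [abs_sub_comm]; exact hgenus y
      calc |b| ≤ |C.alex y - C.alg y| + |C.alex x - C.alg x| := by
            rw [hb]; exact abs_sub _ _
        _ ≤ 2 * g := by linarith
    have hs₀eq : s₀ = 2 * (a : ℝ) / (b : ℝ) := by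
      have hbR : (b : ℝ) ≠ 0 := Int.cast_ne_zero.mpr hbne
      have hnum : u x - u y = (a : ℝ) := by
        have hux : u x = (C.alg x : ℝ) := rfl
        have huy : u y = (C.alg y : ℝ) := rfl
        rw [hux, huy, ha]
        push_cast
        ring
      rw [← hEq, ← hbcast, hnum, div_div_eq_mul_div]
      ring
    exact denom_lemma g a b hg hbne hb2 s₀ hs₀eq
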